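/- Let A be a symmetric integer matrix such that A modulo 4 equals diag(r·[[2,1],[1,2]], s·[[0,1],[1,0]], t·[[0,2],[2,0]], p·[2], m·[0]) with r ≥ 2. Then there is an integer matrix P with det(P) = ±1 such that P^T A P modulo 4 equals diag((r−2)·[[2,1],[1,2]], (s+2)·[[0,1],[1,0]], t·[[0,2],[2,0]], p·[2], m·[0]). -/

import Mathlib

/-- Entry `(i,j)` of the block diagonal matrix
`diag(r·[[2,1],[1,2]], s·[[0,1],[1,0]], t·[[0,2],[2,0]], p·[2], m·[0])`
(the `m` trailing zero rows/columns are implicit: the entry is `0` there). -/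
def nfEntry (r s t p : ℕ) (i j : ℕ) : ℤ :=
  if i < 2*r ∧ j < 2*r then (if i = j then 2 else if i / 2 = j / 2 then 1 else 0)
  else if 2*r ≤ i ∧ i < 2*r+2*s ∧ 2*r ≤ j ∧ j < 2*r+2*s then
    (if i ≠ j ∧ i / 2 = j / 2 then 1 else 0)
  else if 2*r+2*s ≤ i ∧ i < 2*r+2*s+2*t ∧ 2*r+2*s ≤ j ∧ j < 2*r+2*s+2*t then
    (if i ≠ j ∧ i / 2 = j / 2 then 2 else 0)
  else if 2*r+2*s+2*t ≤ i ∧ i < 2*r+2*s+2*t+p ∧ i = j then 2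
  else 0

/-- The 4×4 change-of-basis matrix. -/
def qE : ℕ → ℕ → ℤ
  | 0,0 => 1 | 0,1 => 2 | 0,2 => 1 | 0,3 => 1
  | 1,0 => 0 | 1,1 => -1 | 1,2 => -1 | 1,3 => -1
  | 2,0 => 2 | 2,1 => 2 | 2,2 => -1 | 2,3 => -1
  | 3,0 => 1 | 3,1 => -1 | 3,2 => -1 | 3,3 => 0
  | _,_ => 0

/-- Its integer inverse. -/
def qE' : ℕ → ℕ → ℤ
  | 0,0 => 3 | 0,1 => 4 | 0,2 => -1 | 0,3 => 0
  | 1,0 => -2 | 1,1 => -3 | 1,2 => 1 | 1,3 => 0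
  | 2,0 => 5 | 2,1 => 7 | 2,2 => -2 | 2,3 => -1
  | 3,0 => -3 | 3,1 => -5 | 3,2 => 1 | 3,3 => 1
  | _,_ => 0

/-- Entry of the big matrix: identity except a 4×4 window `q` at offset `a`. -/
def pE (q : ℕ → ℕ → ℤ) (a i j : ℕ) : ℤ :=
  if a ≤ i ∧ i < a+4 ∧ a ≤ j ∧ j < a+4 then q (i-a) (j-a) else if i = j then 1 else 0

lemma pE_out_left {q} {a i j : ℕ} (hi : ¬(a ≤ i ∧ i < a+4)) :
    pE q a i j = if i = j then 1 else 0 := by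
  unfold pE; rw [if_neg (by tauto)]

lemma pE_out_right {q} {a i j : ℕ} (hj : ¬(a ≤ j ∧ j < a+4)) :
    pE q a i j = if i = j then 1 else 0 := by
  unfold pE; rw [if_neg (by tauto)]

lemma pE_in {q} {a i j : ℕ} (hi : a ≤ i ∧ i < a+4) (hj : a ≤ j ∧ j < a+4) :
    pE q a i j = q (i-a) (j-a) := by
  unfold pE; rw [if_pos (by tauto)]

lemma sum_window {R : Type*} [AddCommMonoid R] {n a : ℕ} (h : a + 4 ≤ n) (f : Fin n → R)
    (hf : ∀ k : Fin n, ¬(a ≤ (k:ℕ) ∧ (k:ℕ) < a + 4) → f k = 0) :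
    ∑ k, f k = f ⟨a, by omega⟩ + f ⟨a+1, by omega⟩ + f ⟨a+2, by omega⟩ + f ⟨a+3, by omega⟩ := by
  have h0 : (⟨a, by omega⟩ : Fin n) ∉
      ({⟨a+1, by omega⟩, ⟨a+2, by omega⟩, ⟨a+3, by omega⟩} : Finset (Fin n)) := by
    simp [Fin.ext_iff]
  have h1 : (⟨a+1, by omega⟩ : Fin n) ∉
      ({⟨a+2, by omega⟩, ⟨a+3, by omega⟩} : Finset (Fin n)) := by
    simp [Fin.ext_iff]
  have h2 : (⟨a+2, by omega⟩ : Fin n) ∉ ({⟨a+3, by omega⟩} : Finset (Fin n)) := by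
    simp [Fin.ext_iff]
  have key : ∑ k ∈ ({⟨a, by omega⟩, ⟨a+1, by omega⟩, ⟨a+2, by omega⟩, ⟨a+3, by omega⟩} :
      Finset (Fin n)), f k = ∑ k, f k := by
    refine Finset.sum_subset (Finset.subset_univ _) ?_
    intro x _ hx
    apply hf
    simp only [Finset.mem_insert, Finset.mem_singleton, Fin.ext_iff] at hx
    omega
  rw [← key, Finset.sum_insert h0, Finset.sum_insert h1, Finset.sum_insert h2,
    Finset.sum_singleton]
  abel

lemma nf_eq_outside {r s t p i j a : ℕ} (hge : 2 ≤ r) (ha : a = 2*(r-2))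
    (hi : ¬(a ≤ i ∧ i < a+4)) (hj : ¬(a ≤ j ∧ j < a+4)) :
    nfEntry r s t p i j = nfEntry (r-2) (s+2) t p i j := by
  subst ha; simp only [nfEntry]; split_ifs <;> omega

lemma nf_zero {r s t p i j a : ℕ} (hge : 2 ≤ r) (ha : a = 2*(r-2))
    (h : (a ≤ i ∧ i < a+4 ∧ ¬(a ≤ j ∧ j < a+4)) ∨
         (a ≤ j ∧ j < a+4 ∧ ¬(a ≤ i ∧ i < a+4))) :
    nfEntry r s t p i j = 0 := by
  subst ha; simp only [nfEntry]; split_ifs <;> omega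

lemma nf'_zero {r s t p i j a : ℕ} (hge : 2 ≤ r) (ha : a = 2*(r-2))
    (h : (a ≤ i ∧ i < a+4 ∧ ¬(a ≤ j ∧ j < a+4)) ∨
         (a ≤ j ∧ j < a+4 ∧ ¬(a ≤ i ∧ i < a+4))) :
    nfEntry (r-2) (s+2) t p i j = 0 := by
  subst ha; simp only [nfEntry]; split_ifs <;> omega

lemma nf_win {r s t p v u a : ℕ} (hge : 2 ≤ r) (ha : a = 2*(r-2)) (hv : v < 4) (hu : u < 4) :
    nfEntry r s t p (a+v) (a+u) = if v = u then 2 else if v/2 = u/2 then 1 else 0 := by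
  subst ha; simp only [nfEntry]; split_ifs <;> omega

lemma nf'_win {r s t p x y a : ℕ} (hge : 2 ≤ r) (ha : a = 2*(r-2)) (hx : x < 4) (hy : y < 4) :
    nfEntry (r-2) (s+2) t p (a+x) (a+y) = if x ≠ y ∧ x/2 = y/2 then 1 else 0 := by
  subst ha; simp only [nfEntry]; split_ifs <;> omega

lemma cast_ite01 (c : Prop) [Decidable c] :
    (((if c then 1 else 0 : ℤ)) : ZMod 4) = if c then 1 else 0 := by
  split_ifs <;> simp

/-- The window matrix times its inverse is the identity. -/
lemma pmul_one (n a : ℕ) (han : a + 4 ≤ n) :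
    (Matrix.of fun i j : Fin n => pE qE a ↑i ↑j) *
      (Matrix.of fun i j : Fin n => pE qE' a ↑i ↑j) = 1 := by
  ext i j
  rw [Matrix.mul_apply, Matrix.one_apply]
  simp only [Matrix.of_apply]
  by_cases hi : a ≤ (i:ℕ) ∧ (i:ℕ) < a+4
  · rw [sum_window han _ (fun k hk => by
      rw [pE_out_right hk, if_neg (by omega), zero_mul])]
    simp only [Fin.val_mk]
    rw [pE_in hi (by omega), pE_in hi (by omega), pE_in hi (by omega), pE_in hi (by omega)]
    simp only [Nat.sub_self, Nat.add_sub_cancel_left]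
    by_cases hj : a ≤ (j:ℕ) ∧ (j:ℕ) < a+4
    · rw [pE_in (by omega) hj, pE_in (by omega) hj, pE_in (by omega) hj, pE_in (by omega) hj]
      simp only [Nat.sub_self, Nat.add_sub_cancel_left]
      obtain ⟨x, hx4, hix⟩ : ∃ x, x < 4 ∧ (i:ℕ) = a + x := ⟨(i:ℕ)-a, by omega, by omega⟩
      obtain ⟨y, hy4, hjy⟩ : ∃ y, y < 4 ∧ (j:ℕ) = a + y := ⟨(j:ℕ)-a, by omega, by omega⟩
      have hiff : i = j ↔ x = y := by rw [Fin.ext_iff]; omega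
      rw [hix, hjy, Nat.add_sub_cancel_left, Nat.add_sub_cancel_left, if_congr hiff rfl rfl]
      interval_cases x <;> interval_cases y <;> decide
    · rw [pE_out_right hj, pE_out_right hj, pE_out_right hj, pE_out_right hj,
        if_neg (by omega), if_neg (by omega), if_neg (by omega), if_neg (by omega),
        if_neg (by rintro rfl; exact hj hi)]
      ring
  · have hv : ∀ k : Fin n, pE qE a ↑i ↑k = if i = k then 1 else 0 := by
      intro k; rw [pE_out_left hi]; simp [Fin.val_inj]
    simp only [hv, ite_mul, one_mul, zero_mul, Finset.sum_ite_eq, Finset.mem_univ, if_true]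
    rw [pE_out_left hi]
    simp [Fin.val_inj]

open Matrix in
/-- Lemma 2.4: if r ≥ 2 then two blocks [[2,1],[1,2]] can be traded for two blocks [[0,1],[1,0]]. -/
theorem stmt_5 (n r s t p m : ℕ) (A : Matrix (Fin n) (Fin n) ℤ)
    (hsym : A.IsSymm)
    (hn : n = 2*r + 2*s + 2*t + p + m)
    (hge : 2 ≤ r)
    (hA : ∀ i j : Fin n,
      ((A i j : ℤ) : ZMod 4) = ((nfEntry r s t p (i : ℕ) (j : ℕ) : ℤ) : ZMod 4)) :
    ∃ P : Matrix (Fin n) (Fin n) ℤ, (P.det = 1 ∨ P.det = -1) ∧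
      ∀ i j : Fin n,
        (((Pᵀ * A * P) i j : ℤ) : ZMod 4) = ((nfEntry (r-2) (s+2) t p (i : ℕ) (j : ℕ) : ℤ) : ZMod 4) := by
  set a := 2*(r-2) with ha
  have han : a + 4 ≤ n := by omega
  refine ⟨Matrix.of fun i j : Fin n => pE qE a ↑i ↑j, ?_, ?_⟩
  · have hdet := congrArg Matrix.det (pmul_one n a han)
    rw [Matrix.det_mul, Matrix.det_one] at hdet
    exact Int.isUnit_iff.mp (IsUnit.of_mul_eq_one _ hdet)
  · intro i j
    rw [Matrix.mul_apply]
    simp only [Matrix.mul_apply, Matrix.transpose_apply, Matrix.of_apply]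
    push_cast
    simp only [hA]
    by_cases hi : a ≤ (i:ℕ) ∧ (i:ℕ) < a+4
    · have hinner : ∀ k : Fin n,
          (∑ l : Fin n, ((pE qE a ↑l ↑i : ℤ) : ZMod 4) * ((nfEntry r s t p ↑l ↑k : ℤ) : ZMod 4)) =
            ((qE 0 ((i:ℕ)-a) : ℤ) : ZMod 4) * ((nfEntry r s t p a ↑k : ℤ) : ZMod 4)
          + ((qE 1 ((i:ℕ)-a) : ℤ) : ZMod 4) * ((nfEntry r s t p (a+1) ↑k : ℤ) : ZMod 4)
          + ((qE 2 ((i:ℕ)-a) : ℤ) : ZMod 4) * ((nfEntry r s t p (a+2) ↑k : ℤ) : ZMod 4)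
          + ((qE 3 ((i:ℕ)-a) : ℤ) : ZMod 4) * ((nfEntry r s t p (a+3) ↑k : ℤ) : ZMod 4) := by
        intro k
        rw [sum_window han _ (fun l hl => by
          rw [pE_out_left hl, if_neg (by omega)]; simp)]
        simp only [Fin.val_mk]
        rw [pE_in (by omega) hi, pE_in (by omega) hi, pE_in (by omega) hi, pE_in (by omega) hi]
        simp only [Nat.sub_self, Nat.add_sub_cancel_left]
      simp only [hinner]
      by_cases hj : a ≤ (j:ℕ) ∧ (j:ℕ) < a+4
      · rw [sum_window han _ (fun k hk => by
          rw [pE_out_left hk, if_neg (by omega)]; simp)]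
        simp only [Fin.val_mk]
        rw [pE_in (by omega) hj, pE_in (by omega) hj, pE_in (by omega) hj, pE_in (by omega) hj]
        simp only [Nat.sub_self, Nat.add_sub_cancel_left]
        obtain ⟨x, hx4, hix⟩ : ∃ x, x < 4 ∧ (i:ℕ) = a + x := ⟨(i:ℕ)-a, by omega, by omega⟩
        obtain ⟨y, hy4, hjy⟩ : ∃ y, y < 4 ∧ (j:ℕ) = a + y := ⟨(j:ℕ)-a, by omega, by omega⟩
        rw [hix, hjy, Nat.add_sub_cancel_left, Nat.add_sub_cancel_left]
        have hval : ∀ v u : ℕ, v < 4 → u < 4 →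
            nfEntry r s t p (a+v) (a+u) = if v = u then 2 else if v/2 = u/2 then 1 else 0 :=
          fun v u hv hu => nf_win hge ha hv hu
        have h00 : nfEntry r s t p a a = 2 := by simpa using hval 0 0 (by norm_num) (by norm_num)
        have h01 : nfEntry r s t p a (a+1) = 1 := by simpa using hval 0 1 (by norm_num) (by norm_num)
        have h02 : nfEntry r s t p a (a+2) = 0 := by simpa using hval 0 2 (by norm_num) (by norm_num)
        have h03 : nfEntry r s t p a (a+3) = 0 := by simpa using hval 0 3 (by norm_num) (by norm_num)
        have h10 : nfEntry r s t p (a+1) a = 1 := by simpa using hval 1 0 (by norm_num) (by norm_num)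
        have h11 : nfEntry r s t p (a+1) (a+1) = 2 := by simpa using hval 1 1 (by norm_num) (by norm_num)
        have h12 : nfEntry r s t p (a+1) (a+2) = 0 := by simpa using hval 1 2 (by norm_num) (by norm_num)
        have h13 : nfEntry r s t p (a+1) (a+3) = 0 := by simpa using hval 1 3 (by norm_num) (by norm_num)
        have h20 : nfEntry r s t p (a+2) a = 0 := by simpa using hval 2 0 (by norm_num) (by norm_num)
        have h21 : nfEntry r s t p (a+2) (a+1) = 0 := by simpa using hval 2 1 (by norm_num) (by norm_num)
        have h22 : nfEntry r s t p (a+2) (a+2) = 2 := by simpa using hval 2 2 (by norm_num) (by norm_num)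
        have h23 : nfEntry r s t p (a+2) (a+3) = 1 := by simpa using hval 2 3 (by norm_num) (by norm_num)
        have h30 : nfEntry r s t p (a+3) a = 0 := by simpa using hval 3 0 (by norm_num) (by norm_num)
        have h31 : nfEntry r s t p (a+3) (a+1) = 0 := by simpa using hval 3 1 (by norm_num) (by norm_num)
        have h32 : nfEntry r s t p (a+3) (a+2) = 1 := by simpa using hval 3 2 (by norm_num) (by norm_num)
        have h33 : nfEntry r s t p (a+3) (a+3) = 2 := by simpa using hval 3 3 (by norm_num) (by norm_num)
        rw [h00, h01, h02, h03, h10, h11, h12, h13, h20, h21, h22, h23, h30, h31, h32, h33,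
          nf'_win hge ha hx4 hy4]
        interval_cases x <;> interval_cases y <;> decide
      · have hw : ∀ k : Fin n, ((pE qE a ↑k ↑j : ℤ) : ZMod 4) = if k = j then 1 else 0 := by
          intro k; rw [pE_out_right hj]
          rw [cast_ite01]
          simp [Fin.val_inj]
        simp only [hw, mul_ite, mul_one, mul_zero, Finset.sum_ite_eq', Finset.mem_univ, if_true]
        have z0 : nfEntry r s t p a ↑j = 0 := nf_zero hge ha (Or.inl ⟨by omega, by omega, hj⟩)
        have z1 : nfEntry r s t p (a+1) ↑j = 0 := nf_zero hge ha (Or.inl ⟨by omega, by omega, hj⟩)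
        have z2 : nfEntry r s t p (a+2) ↑j = 0 := nf_zero hge ha (Or.inl ⟨by omega, by omega, hj⟩)
        have z3 : nfEntry r s t p (a+3) ↑j = 0 := nf_zero hge ha (Or.inl ⟨by omega, by omega, hj⟩)
        rw [z0, z1, z2, z3, nf'_zero hge ha (Or.inl ⟨by omega, by omega, hj⟩)]
        simp
    · have hv : ∀ l k : Fin n, ((pE qE a ↑l ↑i : ℤ) : ZMod 4) = if l = i then 1 else 0 := by
        intro l k; rw [pE_out_right hi, cast_ite01]; simp [Fin.val_inj]
      have hinner : ∀ k : Fin n,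
          (∑ l : Fin n, ((pE qE a ↑l ↑i : ℤ) : ZMod 4) * ((nfEntry r s t p ↑l ↑k : ℤ) : ZMod 4)) =
            ((nfEntry r s t p ↑i ↑k : ℤ) : ZMod 4) := by
        intro k
        simp only [hv _ k, ite_mul, one_mul, zero_mul, Finset.sum_ite_eq', Finset.mem_univ,
          if_true]
      simp only [hinner]
      by_cases hj : a ≤ (j:ℕ) ∧ (j:ℕ) < a+4
      · rw [sum_window han _ (fun k hk => by
          rw [pE_out_left hk, if_neg (by omega)]; simp)]
        simp only [Fin.val_mk]
        rw [pE_in (by omega) hj, pE_in (by omega) hj, pE_in (by omega) hj, pE_in (by omega) hj]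
        have z0 : nfEntry r s t p ↑i a = 0 := nf_zero hge ha (Or.inr ⟨by omega, by omega, hi⟩)
        have z1 : nfEntry r s t p ↑i (a+1) = 0 := nf_zero hge ha (Or.inr ⟨by omega, by omega, hi⟩)
        have z2 : nfEntry r s t p ↑i (a+2) = 0 := nf_zero hge ha (Or.inr ⟨by omega, by omega, hi⟩)
        have z3 : nfEntry r s t p ↑i (a+3) = 0 := nf_zero hge ha (Or.inr ⟨by omega, by omega, hi⟩)
        rw [z0, z1, z2, z3, nf'_zero hge ha (Or.inr ⟨by omega, by omega, hi⟩)]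
        simp
      · have hw : ∀ k : Fin n, ((pE qE a ↑k ↑j : ℤ) : ZMod 4) = if k = j then 1 else 0 := by
          intro k; rw [pE_out_right hj, cast_ite01]; simp [Fin.val_inj]
        simp only [hw, mul_ite, mul_one, mul_zero, Finset.sum_ite_eq', Finset.mem_univ, if_true]
        rw [nf_eq_outside hge ha hi hj]
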